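/- For every real number p with 1 < p ≤ 2, every μ ∈ ℝ, and all vectors ξ, η in ℝ^m with (μ, ξ, η) ≠ (0, 0, 0), ⟨(μ²+|ξ|²)^{(p-2)/2} ξ − (μ²+|η|²)^{(p-2)/2} η, ξ − η⟩ ≥ (p−1)(2μ² + |ξ|² + |η|²)^{(p-2)/2} |ξ − η|². -/

import Mathlib

set_option maxHeartbeats 1000000

open Real

local notation "⟪" x ", " y "⟫" => @inner ℝ _ _ x y

lemma key_mono (m : ℕ) (p : ℝ) (hp1 : 1 < p) (hp2 : p ≤ 2) (μ : ℝ) (hμ : μ ≠ 0)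
    (ξ η : EuclideanSpace ℝ (Fin m)) :
    (inner ℝ (((μ ^ 2 + ‖ξ‖ ^ 2) ^ ((p - 2) / 2)) • ξ -
        ((μ ^ 2 + ‖η‖ ^ 2) ^ ((p - 2) / 2)) • η) (ξ - η) : ℝ) ≥
      (p - 1) * (2 * μ ^ 2 + ‖ξ‖ ^ 2 + ‖η‖ ^ 2) ^ ((p - 2) / 2) * ‖ξ - η‖ ^ 2 := by
  set v : EuclideanSpace ℝ (Fin m) := ξ - η with hv
  set e : ℝ := (p - 2) / 2 with he
  set a : ℝ := ‖η‖ ^ 2 with ha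
  set b : ℝ := ⟪η, v⟫ with hb
  set c : ℝ := ‖v‖ ^ 2 with hc
  have ha0 : 0 ≤ a := sq_nonneg _
  have hc0 : 0 ≤ c := sq_nonneg _
  have hμ2 : (0:ℝ) < μ ^ 2 := by positivity
  have hξ : ξ = η + v := by rw [hv]; abel
  -- norm of η + t • v
  have hq : ∀ t : ℝ, ‖η + t • v‖ ^ 2 = a + 2 * b * t + c * t ^ 2 := by
    intro t
    rw [norm_add_sq_real, norm_smul, real_inner_smul_right]
    simp [← ha, ← hb, ← hc, mul_pow, sq_abs]
    ring
  have hξsq : ‖ξ‖ ^ 2 = a + 2 * b + c := by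
    have := hq 1; rw [one_smul] at this; rw [hξ, this]; ring
  have hq0 : ∀ t : ℝ, 0 ≤ a + 2 * b * t + c * t ^ 2 := by
    intro t; rw [← hq t]; positivity
  -- Cauchy-Schwarz
  have hCS : ∀ t : ℝ, (b + c * t) ^ 2 ≤ (a + 2 * b * t + c * t ^ 2) * c := by
    intro t
    have h1 := real_inner_mul_inner_self_le (η + t • v) v
    have h2 : ⟪η + t • v, v⟫ = b + c * t := by
      rw [inner_add_left, real_inner_smul_left, ← hb, real_inner_self_eq_norm_sq, ← hc]; ring
    rw [h2, real_inner_self_eq_norm_sq, real_inner_self_eq_norm_sq, ← hc, hq t] at h1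
    nlinarith [h1]
  set B : ℝ → ℝ := fun t => μ ^ 2 + a + 2 * b * t + c * t ^ 2 with hB
  have hBpos : ∀ t : ℝ, 0 < B t := by
    intro t; have := hq0 t; simp only [hB]; nlinarith
  set g : ℝ → ℝ := fun t => B t ^ e * (b + c * t) with hg
  set g' : ℝ → ℝ := fun t =>
    (2 * b + c * (2 * t)) * e * B t ^ (e - 1) * (b + c * t) + B t ^ e * c with hg'
  have hderiv : ∀ t : ℝ, HasDerivAt g (g' t) t := by
    intro t
    have h1 : HasDerivAt (fun t : ℝ => 2 * b * t) (2 * b) t := by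
      simpa using (hasDerivAt_id t).const_mul (2 * b)
    have h2 : HasDerivAt (fun t : ℝ => c * t ^ 2) (c * (2 * t)) t := by
      simpa using (hasDerivAt_pow 2 t).const_mul c
    have hBd : HasDerivAt B (2 * b + c * (2 * t)) t := by
      exact ((h1.const_add (μ ^ 2 + a)).add h2)
    have hrpow : HasDerivAt (fun t => B t ^ e) ((2 * b + c * (2 * t)) * e * B t ^ (e - 1)) t :=
      hBd.rpow_const (Or.inl (hBpos t).ne')
    have hL : HasDerivAt (fun t : ℝ => b + c * t) c t := by
      simpa using ((hasDerivAt_id t).const_mul c).const_add b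
    exact hrpow.mul hL
  set D : ℝ := 2 * μ ^ 2 + (a + 2 * b + c) + a with hD
  have hDpos : 0 < D := by have := hq0 1; nlinarith
  set C : ℝ := (p - 1) * D ^ e * c with hC
  have hbound : ∀ t ∈ Set.Ioo (0:ℝ) 1, C ≤ g' t := by
    intro t ht
    obtain ⟨ht0, ht1⟩ := ht
    have hBt := hBpos t
    have hBe1 : (0:ℝ) < B t ^ (e - 1) := rpow_pos_of_pos hBt _
    have hBee : B t ^ (e - 1) * B t = B t ^ e := by
      have h := Real.rpow_add hBt (e - 1) 1
      rw [Real.rpow_one, show e - 1 + 1 = e by ring] at h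
      linarith
    -- g' t = B^(e-1) * (2e L² + B c)
    have hrw : g' t = B t ^ (e - 1) * ((p - 2) * (b + c * t) ^ 2 + B t * c) := by
      simp only [hg']
      rw [← hBee]
      have : (p:ℝ) - 2 = 2 * e := by rw [he]; ring
      rw [this]; ring
    rw [hrw]
    have hL2 : (b + c * t) ^ 2 ≤ B t * c := by
      have := hCS t
      have hq0t := hq0 t
      simp only [hB]; nlinarith
    have step1 : (p - 1) * (B t * c) ≤ (p - 2) * (b + c * t) ^ 2 + B t * c := by
      nlinarith [sq_nonneg (b + c * t), mul_nonneg (hBt.le) hc0]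
    have hBD : B t ≤ D := by
      have h1 := hq0 0
      have h2 := hq0 1
      simp only [hB, hD]
      nlinarith [mul_nonneg hc0 (mul_nonneg ht0.le (sub_nonneg.2 ht1.le))]
    have he0 : e ≤ 0 := by rw [he]; linarith
    have hDe : D ^ e ≤ B t ^ e := Real.rpow_le_rpow_of_nonpos hBt hBD he0
    calc C = (p - 1) * D ^ e * c := rfl
      _ ≤ (p - 1) * B t ^ e * c := by
          apply mul_le_mul_of_nonneg_right _ hc0
          exact mul_le_mul_of_nonneg_left hDe (by linarith)
      _ = B t ^ (e - 1) * ((p - 1) * (B t * c)) := by rw [← hBee]; ring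
      _ ≤ B t ^ (e - 1) * ((p - 2) * (b + c * t) ^ 2 + B t * c) := by
          exact mul_le_mul_of_nonneg_left step1 hBe1.le
  have hmvt := (convex_Icc (0:ℝ) 1).mul_sub_le_image_sub_of_le_deriv
    (f := g) (fun t _ => (hderiv t).continuousAt.continuousWithinAt)
    (fun t _ => (hderiv t).differentiableAt.differentiableWithinAt)
    (C := C)
    (by intro t ht
        rw [interior_Icc] at ht
        rw [(hderiv t).deriv]
        exact hbound t ht)
    0 (by norm_num) 1 (by norm_num) (by norm_num)
  -- identify g 1 - g 0 with the inner product
  have hinner : (inner ℝ (((μ ^ 2 + ‖ξ‖ ^ 2) ^ e) • ξ -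
      ((μ ^ 2 + ‖η‖ ^ 2) ^ e) • η) v : ℝ) = g 1 - g 0 := by
    rw [inner_sub_left, real_inner_smul_left, real_inner_smul_left]
    have h1 : ⟪ξ, v⟫ = b + c := by
      rw [hξ, inner_add_left, ← hb, real_inner_self_eq_norm_sq, ← hc]
    have h2 : ⟪η, v⟫ = b := hb.symm
    rw [h1, h2, hξsq]
    simp only [hg, hB]
    rw [show μ ^ 2 + a + 2 * b * 1 + c * 1 ^ 2 = μ ^ 2 + (a + 2 * b + c) from by ring,
       show μ ^ 2 + a + 2 * b * 0 + c * 0 ^ 2 = μ ^ 2 + a from by ring]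
    ring
  have hRHS : (p - 1) * (2 * μ ^ 2 + ‖ξ‖ ^ 2 + ‖η‖ ^ 2) ^ e * ‖v‖ ^ 2 = C := by
    rw [hC, hD, hξsq]
  rw [ge_iff_le, hinner, hRHS]
  calc C = C * (1 - 0) := by ring
    _ ≤ g 1 - g 0 := hmvt

theorem stmt_5 (m : ℕ) (p : ℝ) (hp1 : 1 < p) (hp2 : p ≤ 2) (μ : ℝ)
    (ξ η : EuclideanSpace ℝ (Fin m)) (hne : ¬(μ = 0 ∧ ξ = 0 ∧ η = 0)) :
    (inner ℝ (((μ ^ 2 + ‖ξ‖ ^ 2) ^ ((p - 2) / 2)) • ξ -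
        ((μ ^ 2 + ‖η‖ ^ 2) ^ ((p - 2) / 2)) • η) (ξ - η) : ℝ) ≥
      (p - 1) * (2 * μ ^ 2 + ‖ξ‖ ^ 2 + ‖η‖ ^ 2) ^ ((p - 2) / 2) * ‖ξ - η‖ ^ 2 := by
  by_cases hμ : μ = 0
  · subst hμ
    have hξη : ¬(ξ = 0 ∧ η = 0) := fun h => hne ⟨rfl, h⟩
    set e : ℝ := (p - 2) / 2 with he
    set w : EuclideanSpace ℝ (Fin m) := ξ - η with hw
    set F : ℝ → ℝ := fun s => (s ^ 2 + ‖ξ‖ ^ 2) ^ e * ⟪ξ, w⟫ -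
      (s ^ 2 + ‖η‖ ^ 2) ^ e * ⟪η, w⟫ -
      (p - 1) * (2 * s ^ 2 + ‖ξ‖ ^ 2 + ‖η‖ ^ 2) ^ e * ‖w‖ ^ 2 with hF
    have hFs : ∀ s : ℝ, s ≠ 0 → 0 ≤ F s := by
      intro s hs
      have h := key_mono m p hp1 hp2 s hs ξ η
      rw [ge_iff_le, inner_sub_left, real_inner_smul_left, real_inner_smul_left] at h
      simp only [hF]
      linarith
    have hpos : (0:ℝ) < ‖ξ‖ ^ 2 + ‖η‖ ^ 2 := by
      rcases (not_and_or.mp hξη) with h | h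
      · have : 0 < ‖ξ‖ := norm_pos_iff.mpr h
        positivity
      · have : 0 < ‖η‖ := norm_pos_iff.mpr h
        positivity
    have hcont : ContinuousAt F 0 := by
      have c3 : ContinuousAt (fun s : ℝ =>
          (p - 1) * (2 * s ^ 2 + ‖ξ‖ ^ 2 + ‖η‖ ^ 2) ^ e * ‖w‖ ^ 2) 0 := by
        apply ContinuousAt.mul _ continuousAt_const
        apply ContinuousAt.mul continuousAt_const
        apply ContinuousAt.rpow_const (by fun_prop)
        left
        norm_num
        linarith
      have c1 : ContinuousAt (fun s : ℝ => (s ^ 2 + ‖ξ‖ ^ 2) ^ e * ⟪ξ, w⟫) 0 := by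
        by_cases hξ0 : ξ = 0
        · have : (fun s : ℝ => (s ^ 2 + ‖ξ‖ ^ 2) ^ e * ⟪ξ, w⟫) =
              fun _ : ℝ => (0:ℝ) := by
            funext s; simp [hξ0]
          rw [this]; exact continuousAt_const
        · apply ContinuousAt.mul _ continuousAt_const
          apply ContinuousAt.rpow_const (by fun_prop)
          left
          have h1 : 0 < ‖ξ‖ := norm_pos_iff.mpr hξ0
          show (0:ℝ) ^ 2 + ‖ξ‖ ^ 2 ≠ 0
          nlinarith
      have c2 : ContinuousAt (fun s : ℝ => (s ^ 2 + ‖η‖ ^ 2) ^ e * ⟪η, w⟫) 0 := by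
        by_cases hη0 : η = 0
        · have : (fun s : ℝ => (s ^ 2 + ‖η‖ ^ 2) ^ e * ⟪η, w⟫) =
              fun _ : ℝ => (0:ℝ) := by
            funext s; simp [hη0]
          rw [this]; exact continuousAt_const
        · apply ContinuousAt.mul _ continuousAt_const
          apply ContinuousAt.rpow_const (by fun_prop)
          left
          have h1 : 0 < ‖η‖ := norm_pos_iff.mpr hη0
          show (0:ℝ) ^ 2 + ‖η‖ ^ 2 ≠ 0
          nlinarith
      exact (c1.sub c2).sub c3
    have ht : Filter.Tendsto F (nhdsWithin 0 {(0:ℝ)}ᶜ) (nhds (F 0)) :=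
      hcont.tendsto.mono_left nhdsWithin_le_nhds
    have hF0 : 0 ≤ F 0 :=
      ge_of_tendsto ht (by
        filter_upwards [self_mem_nhdsWithin] with s hs using hFs s hs)
    rw [ge_iff_le, inner_sub_left, real_inner_smul_left, real_inner_smul_left]
    simp only [hF] at hF0
    linarith
  · exact key_mono m p hp1 hp2 μ hμ ξ η
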